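/- If a graph G has no two adjacent vertices both of degree at least 4 and the set of degree-three vertices induces a bipartite subgraph, then G is 3-colorable. -/

import Mathlib

open SimpleGraph

/-- If every edge of a finite graph `G` has at least one endpoint of degree exactly three,
and the subgraph induced by the degree-three vertices is bipartite, then `G` is
3-colorable. -/
theorem three_colorable_of_deg3_bipartite {V : Type*} [Fintype V] [DecidableEq V]
    (G : SimpleGraph V) [DecidableRel G.Adj]
    (h1 : ∀ u v : V, G.Adj u v → G.degree u = 3 ∨ G.degree v = 3)
    (h2 : (G.induce {v : V | G.degree v = 3}).Colorable 2) :
    G.Colorable 3 := by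
  obtain ⟨C⟩ := h2
  refine ⟨⟨fun v => if h : G.degree v = 3 then (C ⟨v, h⟩).castSucc else 2, ?_⟩⟩
  intro u v huv
  by_cases hu : G.degree u = 3 <;> by_cases hv : G.degree v = 3
  · simp only [dif_pos hu, dif_pos hv]
    have : ¬ C ⟨u, hu⟩ = C ⟨v, hv⟩ := C.valid (by exact huv)
    intro hc
    exact this (Fin.castSucc_injective 2 hc)
  · simp only [dif_pos hu, dif_neg hv]
    intro hc
    have := (C ⟨u, hu⟩).isLt
    rw [Fin.ext_iff] at hc
    simp [Fin.val_two] at hc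
    omega
  · simp only [dif_neg hu, dif_pos hv]
    intro hc
    have := (C ⟨v, hv⟩).isLt
    rw [Fin.ext_iff] at hc
    simp [Fin.val_two] at hc
    omega
  · exact absurd (h1 u v huv) (by tauto)
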